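/- Let A ⊂ ℝ^n be a finite set and π : A → ℝ a function such that π(α) ≤ 0 for all α ∈ A, with π(α) = 0 whenever α is an extreme point of P := conv(A). Then the upper envelope satisfies L(A, π) = (−∞, 0] × P, that is, conv{(π(α) − s, α) : α ∈ A, s ≥ 0} = {(y, p) ∈ ℝ × ℝ^n : y ≤ 0, p ∈ conv(A)}. -/

import Mathlib

/-- The upper envelope `L(A, π) = conv{(π(α) - s, α) : α ∈ A, s ≥ 0} ⊆ ℝ^{1+n}`. -/
noncomputable def upperEnvelope {n : ℕ} (A : Finset (Fin n → ℝ)) (π : (Fin n → ℝ) → ℝ) :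
    Set (ℝ × (Fin n → ℝ)) :=
  convexHull ℝ {p : ℝ × (Fin n → ℝ) | ∃ α ∈ A, ∃ s : ℝ, 0 ≤ s ∧ p = (π α - s, α)}

theorem upperEnvelope_eq_of_nonpos_vanishing_on_vertices
    (n : ℕ) (A : Finset (Fin n → ℝ)) (π : (Fin n → ℝ) → ℝ)
    (hπ : ∀ α ∈ A, π α ≤ 0)
    (hπ0 : ∀ α ∈ A,
      α ∈ Set.extremePoints ℝ (convexHull ℝ (A : Set (Fin n → ℝ))) → π α = 0) :
    upperEnvelope A π
      = {p : ℝ × (Fin n → ℝ) | p.1 ≤ 0 ∧ p.2 ∈ convexHull ℝ (A : Set (Fin n → ℝ))} := by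
  set E := Set.extremePoints ℝ (convexHull ℝ (A : Set (Fin n → ℝ))) with hE
  have hEA : E ⊆ (A : Set (Fin n → ℝ)) := extremePoints_convexHull_subset
  have hEfin : E.Finite := (A.finite_toSet).subset hEA
  -- Minkowski: convexHull E = convexHull A
  have hconv : convexHull ℝ E = convexHull ℝ (A : Set (Fin n → ℝ)) := by
    have hclosed : IsClosed (convexHull ℝ E) := (hEfin.isCompact_convexHull (𝕜 := ℝ)).isClosed
    have := closure_convexHull_extremePoints (A.finite_toSet.isCompact_convexHull (𝕜 := ℝ))
      (convex_convexHull ℝ (A : Set (Fin n → ℝ)))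
    rw [← hE] at this
    calc convexHull ℝ E = closure (convexHull ℝ E) := (hclosed.closure_eq).symm
      _ = convexHull ℝ (A : Set (Fin n → ℝ)) := this
  apply le_antisymm
  · -- convex hull is contained in the convex RHS
    apply convexHull_min
    · rintro p ⟨α, hα, s, hs, rfl⟩
      exact ⟨by simpa using sub_nonpos.2 (le_trans (hπ α hα) hs),
        subset_convexHull ℝ _ hα⟩
    · have h1 : Convex ℝ {p : ℝ × (Fin n → ℝ) | p.1 ≤ 0} := by
        intro x hx y hy a b ha hb hab
        simp only [Set.mem_setOf_eq] at *
        have : a * x.1 + b * y.1 ≤ 0 :=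
          add_nonpos (mul_nonpos_of_nonneg_of_nonpos ha hx)
            (mul_nonpos_of_nonneg_of_nonpos hb hy)
        simpa using this
      have h2 : Convex ℝ {p : ℝ × (Fin n → ℝ) |
          p.2 ∈ convexHull ℝ (A : Set (Fin n → ℝ))} := by
        intro x hx y hy a b ha hb hab
        exact (convex_convexHull ℝ _) hx hy ha hb hab
      exact h1.inter h2
  · rintro ⟨y, p⟩ ⟨hy, hp⟩
    rw [← hconv] at hp
    -- map q ↦ (y, q) is affine; image of conv E lands in conv S
    let f : (Fin n → ℝ) →ᵃ[ℝ] ℝ × (Fin n → ℝ) :=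
      { toFun := fun q => (y, q)
        linear := LinearMap.prod 0 LinearMap.id
        map_vadd' := by intro q v; ext <;> simp }
    have himg : f '' (convexHull ℝ E) = convexHull ℝ (f '' E) :=
      (f.image_convexHull E)
    have hsub : f '' E ⊆
        {p : ℝ × (Fin n → ℝ) | ∃ α ∈ A, ∃ s : ℝ, 0 ≤ s ∧ p = (π α - s, α)} := by
      rintro q ⟨e, he, rfl⟩
      refine ⟨e, hEA he, -y, by linarith, ?_⟩
      have : π e = 0 := hπ0 e (hEA he) he
      simp [f, this]
    have : (y, p) ∈ convexHull ℝ (f '' E) := by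
      rw [← himg]; exact ⟨p, hp, rfl⟩
    exact convexHull_mono hsub this
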